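/- For real matrices A and B of the same shape n × m, the trace norm of the Hadamard product satisfies ‖A ∘ B‖_tr ≤ μ(A)² · ‖A‖_tr · ‖B‖_tr, where μ(A) is the coherence of A. -/

import Mathlib

open Matrix

/-- The singular values of a real matrix: square roots of the eigenvalues of `Aᵀ * A`. -/
noncomputable def singularValues {n d : ℕ} (A : Matrix (Fin n) (Fin d) ℝ) : Fin d → ℝ :=
  fun i => Real.sqrt ((show (Aᵀ * A).IsHermitian by simpa using Matrix.isHermitian_conjTranspose_mul_self A).eigenvalues i)

/-- The trace (nuclear) norm: sum of singular values. -/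
noncomputable def traceNorm {n d : ℕ} (A : Matrix (Fin n) (Fin d) ℝ) : ℝ :=
  ∑ i, singularValues A i

def IsCon {a b : ℕ} (W : Matrix (Fin a) (Fin b) ℝ) : Prop :=
  ∀ x : Fin b → ℝ, (W *ᵥ x) ⬝ᵥ (W *ᵥ x) ≤ x ⬝ᵥ x

lemma dot_self_nonneg {a : ℕ} (x : Fin a → ℝ) : 0 ≤ x ⬝ᵥ x :=
  Finset.sum_nonneg fun _ _ => mul_self_nonneg _

lemma dot_CS {a : ℕ} (x y : Fin a → ℝ) :
    x ⬝ᵥ y ≤ Real.sqrt (x ⬝ᵥ x) * Real.sqrt (y ⬝ᵥ y) := by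
  have h := Finset.sum_mul_sq_le_sq_mul_sq Finset.univ x y
  refine (le_abs_self _).trans ?_
  rw [← Real.sqrt_sq_eq_abs, ← Real.sqrt_mul (dot_self_nonneg x)]
  refine Real.sqrt_le_sqrt ?_
  simpa [dotProduct, pow_two, Finset.mul_sum, Finset.sum_mul, mul_assoc, mul_comm, mul_left_comm]
    using h

lemma spec_pack {n m : ℕ} (M : Matrix (Fin n) (Fin m) ℝ) :
    ∃ Q : Matrix (Fin m) (Fin m) ℝ, Qᵀ * Q = 1 ∧ Q * Qᵀ = 1 ∧
      Mᵀ * M = Q * diagonal (fun i => ((show (Mᵀ * M).IsHermitian by simpa using Matrix.isHermitian_conjTranspose_mul_self M)).eigenvalues i)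
        * Qᵀ := by
  set hG := (show (Mᵀ * M).IsHermitian by simpa using Matrix.isHermitian_conjTranspose_mul_self M)
  refine ⟨(hG.eigenvectorUnitary : Matrix (Fin m) (Fin m) ℝ), ?_, ?_, ?_⟩
  · have := Matrix.UnitaryGroup.star_mul_self hG.eigenvectorUnitary
    simpa [Matrix.star_eq_conjTranspose, conjTranspose_eq_transpose_of_trivial] using this
  · have := Matrix.mem_unitaryGroup_iff.mp hG.eigenvectorUnitary.2
    simpa [Matrix.star_eq_conjTranspose, conjTranspose_eq_transpose_of_trivial] using this
  · have h := hG.spectral_theorem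
    simpa [Matrix.star_eq_conjTranspose, conjTranspose_eq_transpose_of_trivial,
      Function.comp] using h

lemma expand_trace {n m : ℕ} (X Y : Matrix (Fin n) (Fin m) ℝ) :
    trace (Xᵀ * Y) = ∑ i, (fun j => X j i) ⬝ᵥ (fun j => Y j i) := by
  simp [trace, diag, mul_apply, dotProduct]

lemma col_dot {a b : ℕ} (X Y : Matrix (Fin a) (Fin b) ℝ) (i : Fin b) :
    (fun j => X j i) ⬝ᵥ (fun j => Y j i) = (Xᵀ * Y) i i := by
  simp [mul_apply, dotProduct]

lemma trace_le_traceNorm {n m : ℕ} (M W : Matrix (Fin n) (Fin m) ℝ) (hW : IsCon W) :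
    trace (Wᵀ * M) ≤ traceNorm M := by
  obtain ⟨Q, hQ1, hQ2, hspec⟩ := spec_pack M
  set lam : Fin m → ℝ := fun i => ((show (Mᵀ * M).IsHermitian by simpa using Matrix.isHermitian_conjTranspose_mul_self M)).eigenvalues i
    with hlam
  have hlam0 : ∀ i, 0 ≤ lam i := fun i =>
    (Matrix.posSemidef_conjTranspose_mul_self M).eigenvalues_nonneg i
  have ht : trace (Wᵀ * M) = trace ((W * Q)ᵀ * (M * Q)) := by
    have h1 : (W * Q)ᵀ * (M * Q) = Qᵀ * (Wᵀ * M * Q) := by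
      rw [transpose_mul]; simp only [Matrix.mul_assoc]
    rw [h1]
    conv_rhs => rw [trace_mul_comm, Matrix.mul_assoc, hQ2, Matrix.mul_one]
  have hMcol : (M * Q)ᵀ * (M * Q) = diagonal lam := by
    calc (M * Q)ᵀ * (M * Q) = Qᵀ * (Mᵀ * M * Q) := by
          rw [transpose_mul]; simp only [Matrix.mul_assoc]
      _ = Qᵀ * (Q * (diagonal lam * (Qᵀ * Q))) := by rw [hspec]; simp only [Matrix.mul_assoc]
      _ = diagonal lam := by rw [hQ1, Matrix.mul_one, ← Matrix.mul_assoc, hQ1, Matrix.one_mul]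
  rw [ht, expand_trace]
  have hbound : ∀ i, (fun j => (W * Q) j i) ⬝ᵥ (fun j => (M * Q) j i) ≤ singularValues M i := by
    intro i
    have hWcol : (fun j => (W * Q) j i) = W *ᵥ (fun l => Q l i) := by
      ext j; simp [mulVec, mul_apply, dotProduct]
    have h1 : (fun j => (W * Q) j i) ⬝ᵥ (fun j => (W * Q) j i) ≤ 1 := by
      rw [hWcol]
      refine (hW _).trans ?_
      have : (fun l => Q l i) ⬝ᵥ (fun l => Q l i) = (Qᵀ * Q) i i := col_dot Q Q i
      rw [this, hQ1]
      simp [Matrix.one_apply]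
    have h2 : (fun j => (M * Q) j i) ⬝ᵥ (fun j => (M * Q) j i) = lam i := by
      rw [col_dot, hMcol, diagonal_apply_eq]
    refine (dot_CS _ _).trans ?_
    rw [h2]
    have := Real.sqrt_le_sqrt h1
    rw [Real.sqrt_one] at this
    calc Real.sqrt _ * Real.sqrt (lam i) ≤ 1 * Real.sqrt (lam i) :=
          mul_le_mul_of_nonneg_right this (Real.sqrt_nonneg _)
      _ = singularValues M i := by rw [one_mul]; rfl
  exact (Finset.sum_le_sum fun i _ => hbound i)

lemma dot_mulVec_left {a b : ℕ} (Q : Matrix (Fin a) (Fin b) ℝ) (x : Fin a → ℝ) (z : Fin b → ℝ) :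
    x ⬝ᵥ (Q *ᵥ z) = (Qᵀ *ᵥ x) ⬝ᵥ z := by
  rw [dotProduct_mulVec, mulVec_transpose]

lemma quad2 {a b : ℕ} (A : Matrix (Fin a) (Fin b) ℝ) (x : Fin b → ℝ) :
    (A *ᵥ x) ⬝ᵥ (A *ᵥ x) = x ⬝ᵥ ((Aᵀ * A) *ᵥ x) := by
  rw [← mulVec_mulVec]
  conv_rhs => rw [dotProduct_mulVec, vecMul_transpose]

lemma exists_dual {n m : ℕ} (M : Matrix (Fin n) (Fin m) ℝ) :
    ∃ W : Matrix (Fin n) (Fin m) ℝ, IsCon W ∧ trace (Wᵀ * M) = traceNorm M := by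
  obtain ⟨Q, hQ1, hQ2, hspec⟩ := spec_pack M
  set lam : Fin m → ℝ := fun i => ((show (Mᵀ * M).IsHermitian by simpa using Matrix.isHermitian_conjTranspose_mul_self M)).eigenvalues i
    with hlam
  have hlam0 : ∀ i, 0 ≤ lam i := fun i =>
    (Matrix.posSemidef_conjTranspose_mul_self M).eigenvalues_nonneg i
  set e : Fin m → ℝ := fun i => if lam i = 0 then 0 else (Real.sqrt (lam i))⁻¹ with he
  refine ⟨M * Q * diagonal e * Qᵀ, ?_, ?_⟩
  · -- contraction
    intro x
    set W : Matrix (Fin n) (Fin m) ℝ := M * Q * diagonal e * Qᵀ with hW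
    set f : Fin m → ℝ := e * lam * e with hfdef
    have hWtW : Wᵀ * W = Q * diagonal f * Qᵀ := by
      have h1 : Wᵀ = Q * diagonal e * Qᵀ * Mᵀ := by
        rw [hW]
        simp only [transpose_mul, transpose_transpose, diagonal_transpose]
        simp only [← Matrix.mul_assoc]
      rw [h1, hW]
      calc Q * diagonal e * Qᵀ * Mᵀ * (M * Q * diagonal e * Qᵀ)
          = Q * diagonal e * (Qᵀ * (Mᵀ * M) * Q) * diagonal e * Qᵀ := by
            simp only [← Matrix.mul_assoc]
        _ = Q * diagonal e * diagonal lam * diagonal e * Qᵀ := by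
            rw [hspec]
            rw [show Qᵀ * (Q * diagonal lam * Qᵀ) * Q = (Qᵀ * Q) * diagonal lam * (Qᵀ * Q) by
              simp only [← Matrix.mul_assoc]]
            rw [hQ1, Matrix.one_mul, Matrix.mul_one]
        _ = Q * (diagonal e * diagonal lam * diagonal e) * Qᵀ := by
            simp only [← Matrix.mul_assoc]
        _ = Q * diagonal f * Qᵀ := by
            rw [diagonal_mul_diagonal, diagonal_mul_diagonal]; rfl
    have hf : ∀ i, f i ≤ 1 ∧ 0 ≤ f i := by
      intro i
      have hfi : f i = e i * lam i * e i := rfl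
      by_cases h : lam i = 0
      · simp [hfi, he, h]
      · have hpos : 0 < lam i := lt_of_le_of_ne (hlam0 i) (Ne.symm h)
        have hs : Real.sqrt (lam i) ≠ 0 := by positivity
        have : f i = 1 := by
          rw [hfi, he]
          simp only [h, if_false]
          rw [← Real.mul_self_sqrt (hlam0 i)]
          field_simp
          rw [Real.sqrt_sq (Real.sqrt_nonneg _)]
        rw [this]; norm_num
    calc (W *ᵥ x) ⬝ᵥ (W *ᵥ x) = x ⬝ᵥ ((Wᵀ * W) *ᵥ x) := quad2 W x
      _ = (Qᵀ *ᵥ x) ⬝ᵥ (diagonal f *ᵥ (Qᵀ *ᵥ x)) := by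
          rw [hWtW, ← mulVec_mulVec, ← mulVec_mulVec, dot_mulVec_left]
      _ ≤ (Qᵀ *ᵥ x) ⬝ᵥ (Qᵀ *ᵥ x) := by
          refine Finset.sum_le_sum fun i _ => ?_
          rw [mulVec_diagonal]
          have h1 := (hf i).1; have h2 := (hf i).2
          nlinarith [mul_self_nonneg ((Qᵀ *ᵥ x) i)]
      _ = x ⬝ᵥ ((Q * Qᵀ) *ᵥ x) := by rw [quad2 Qᵀ x, transpose_transpose]
      _ = x ⬝ᵥ x := by rw [hQ2, one_mulVec]
  · -- trace value
    have h1 : trace ((M * Q * diagonal e * Qᵀ)ᵀ * M) = trace (Mᵀ * (M * Q * diagonal e * Qᵀ)) := by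
      rw [← trace_transpose, transpose_mul, transpose_transpose]
    rw [h1]
    have h2 : Mᵀ * (M * Q * diagonal e * Qᵀ) = Q * diagonal lam * Qᵀ * Q * diagonal e * Qᵀ := by
      simp only [← Matrix.mul_assoc]
      rw [show Mᵀ * M * Q * diagonal e * Qᵀ = (Mᵀ * M) * Q * diagonal e * Qᵀ by
        simp only [← Matrix.mul_assoc], hspec]
    rw [h2, Matrix.mul_assoc (Q * diagonal lam) Qᵀ Q, hQ1, Matrix.mul_one]
    rw [trace_mul_comm]
    simp only [← Matrix.mul_assoc]
    rw [hQ1, Matrix.one_mul, diagonal_mul_diagonal, trace_diagonal]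
    unfold traceNorm singularValues
    refine Finset.sum_congr rfl fun i _ => ?_
    by_cases h : lam i = 0
    · have h0 : ((show (Mᵀ * M).IsHermitian by simpa using Matrix.isHermitian_conjTranspose_mul_self M)).eigenvalues i = 0 := h
      simp [he, h, h0]
    · have hpos : 0 < lam i := lt_of_le_of_ne (hlam0 i) (Ne.symm h)
      have hs : Real.sqrt (lam i) ≠ 0 := by positivity
      have hval : lam i * e i = Real.sqrt (lam i) := by
        rw [he]; simp only [h, if_false]
        rw [← Real.mul_self_sqrt (hlam0 i)]
        field_simp
        rw [Real.sqrt_sq (Real.sqrt_nonneg _)]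
      exact hval

lemma isCon_mul {a b c : ℕ} {P : Matrix (Fin a) (Fin b) ℝ} {R : Matrix (Fin b) (Fin c) ℝ}
    (hP : IsCon P) (hR : IsCon R) : IsCon (P * R) := fun x => by
  rw [← mulVec_mulVec]; exact (hP _).trans (hR x)

lemma isCon_diagonal {a : ℕ} {u : Fin a → ℝ} (hu : ∀ i, |u i| ≤ 1) : IsCon (diagonal u) := by
  intro x
  refine Finset.sum_le_sum fun i _ => ?_
  rw [mulVec_diagonal]
  have h1 : u i * u i ≤ 1 := by
    have := abs_mul_abs_self (u i)
    nlinarith [abs_nonneg (u i), hu i]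
  nlinarith [mul_self_nonneg (x i)]

lemma traceNorm_nonneg {n m : ℕ} (B : Matrix (Fin n) (Fin m) ℝ) : 0 ≤ traceNorm B :=
  Finset.sum_nonneg fun _ _ => Real.sqrt_nonneg _

lemma trace_diag_bound {n m : ℕ} (B W : Matrix (Fin n) (Fin m) ℝ) (hW : IsCon W)
    (u : Fin n → ℝ) (v : Fin m → ℝ) (a b : ℝ) (ha : 0 ≤ a) (hb : 0 ≤ b)
    (hu : ∀ i, |u i| ≤ a) (hv : ∀ j, |v j| ≤ b) :
    trace ((diagonal u * W * diagonal v)ᵀ * B) ≤ a * b * traceNorm B := by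
  rcases eq_or_lt_of_le ha with rfl | hapos
  · have hd : diagonal u = 0 := by
      rw [show u = 0 from funext fun i => abs_nonpos_iff.mp (hu i)]
      exact diagonal_zero
    rw [hd, Matrix.zero_mul, Matrix.zero_mul, transpose_zero,
      Matrix.zero_mul, trace_zero, zero_mul, zero_mul]
  rcases eq_or_lt_of_le hb with rfl | hbpos
  · have hd : diagonal v = 0 := by
      rw [show v = 0 from funext fun j => abs_nonpos_iff.mp (hv j)]
      exact diagonal_zero
    rw [hd, Matrix.mul_zero, transpose_zero, Matrix.zero_mul, trace_zero,
      mul_zero, zero_mul]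
  have h1 : ∀ i, |u i / a| ≤ 1 := fun i => by
    rw [abs_div, abs_of_pos hapos, div_le_one hapos]; exact hu i
  have h2 : ∀ j, |v j / b| ≤ 1 := fun j => by
    rw [abs_div, abs_of_pos hbpos, div_le_one hbpos]; exact hv j
  have hcon : IsCon (diagonal (fun i => u i / a) * W * diagonal (fun j => v j / b)) :=
    isCon_mul (isCon_mul (isCon_diagonal h1) hW) (isCon_diagonal h2)
  have key := trace_le_traceNorm B _ hcon
  have hX : diagonal u * W * diagonal v =
      (a * b) • (diagonal (fun i => u i / a) * W * diagonal (fun j => v j / b)) := by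
    have hdu : diagonal u = a • diagonal (fun i => u i / a) := by
      rw [← diagonal_smul]
      refine congrArg diagonal (funext fun i => ?_)
      show u i = a * (u i / a)
      field_simp
    have hdv : diagonal v = b • diagonal (fun j => v j / b) := by
      rw [← diagonal_smul]
      refine congrArg diagonal (funext fun j => ?_)
      show v j = b * (v j / b)
      field_simp
    rw [hdu, hdv, Matrix.smul_mul, Matrix.smul_mul, Matrix.mul_smul, smul_smul]
  rw [hX, transpose_smul, Matrix.smul_mul, trace_smul, smul_eq_mul]
  exact mul_le_mul_of_nonneg_left key (mul_nonneg ha hb)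

lemma isCon_orthonormal {p q : ℕ} {U : Matrix (Fin p) (Fin q) ℝ} (hU : Uᵀ * U = 1) :
    IsCon U := fun x => le_of_eq (by rw [quad2, hU, one_mulVec])

lemma isCon_transpose_orthonormal {p q : ℕ} {V : Matrix (Fin p) (Fin q) ℝ} (hV : Vᵀ * V = 1) :
    IsCon Vᵀ := by
  intro x
  have hP : (V * Vᵀ) * (V * Vᵀ) = V * Vᵀ := by
    rw [Matrix.mul_assoc V Vᵀ (V * Vᵀ), ← Matrix.mul_assoc Vᵀ V Vᵀ, hV, Matrix.one_mul]
  have ht : (Vᵀ *ᵥ x) ⬝ᵥ (Vᵀ *ᵥ x) = x ⬝ᵥ ((V * Vᵀ) *ᵥ x) := by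
    rw [quad2, transpose_transpose]
  have ht0 : 0 ≤ x ⬝ᵥ ((V * Vᵀ) *ᵥ x) := ht ▸ dot_self_nonneg _
  have hPx : ((V * Vᵀ) *ᵥ x) ⬝ᵥ ((V * Vᵀ) *ᵥ x) = x ⬝ᵥ ((V * Vᵀ) *ᵥ x) := by
    rw [quad2, show (V * Vᵀ)ᵀ = V * Vᵀ by rw [transpose_mul, transpose_transpose], hP]
  have hCS := dot_CS x ((V * Vᵀ) *ᵥ x)
  rw [hPx] at hCS
  rw [ht]
  nlinarith [Real.sq_sqrt (dot_self_nonneg x), Real.sq_sqrt ht0, Real.sqrt_nonneg (x ⬝ᵥ x),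
    Real.sqrt_nonneg (x ⬝ᵥ ((V * Vᵀ) *ᵥ x)),
    sq_nonneg (Real.sqrt (x ⬝ᵥ x) - Real.sqrt (x ⬝ᵥ ((V * Vᵀ) *ᵥ x)))]

lemma trace_form {n m : ℕ} (X B : Matrix (Fin n) (Fin m) ℝ) :
    trace (Xᵀ * B) = ∑ j, ∑ i, X i j * B i j := by
  simp [trace, diag, mul_apply]

/-- Lemma 3: `‖A ∘ B‖_tr ≤ μ(A)² ‖A‖_tr ‖B‖_tr`, where `μ(A)` is the coherence computed
from an SVD `A = U Σ Vᵀ` of `A` (`U, V` with orthonormal columns, `Σ = diag σ`, `σ ≥ 0`). -/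
theorem traceNorm_hadamard_le {n m k : ℕ} (A B : Matrix (Fin n) (Fin m) ℝ)
    (U : Matrix (Fin n) (Fin k) ℝ) (V : Matrix (Fin m) (Fin k) ℝ) (σ : Fin k → ℝ)
    (hU : Uᵀ * U = 1) (hV : Vᵀ * V = 1) (hσ : ∀ i, 0 ≤ σ i)
    (hSVD : A = U * Matrix.diagonal σ * Vᵀ) :
    let μA : ℝ := max (⨆ i : Fin n, Real.sqrt (∑ l, (U i l) ^ 2))
                      (⨆ j : Fin m, Real.sqrt (∑ l, (V j l) ^ 2))
    traceNorm (A ⊙ B) ≤ μA ^ 2 * traceNorm A * traceNorm B := by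
  intro μA
  set μ1 : ℝ := ⨆ i : Fin n, Real.sqrt (∑ l, (U i l) ^ 2) with hμ1
  set μ2 : ℝ := ⨆ j : Fin m, Real.sqrt (∑ l, (V j l) ^ 2) with hμ2
  have hμ1nn : 0 ≤ μ1 := Real.iSup_nonneg fun i => Real.sqrt_nonneg _
  have hμ2nn : 0 ≤ μ2 := Real.iSup_nonneg fun j => Real.sqrt_nonneg _
  have hUb : ∀ i l, |U i l| ≤ μ1 := by
    intro i l
    have h1 : |U i l| = Real.sqrt ((U i l) ^ 2) := (Real.sqrt_sq_eq_abs _).symm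
    have h2 : Real.sqrt ((U i l) ^ 2) ≤ Real.sqrt (∑ l', (U i l') ^ 2) :=
      Real.sqrt_le_sqrt (Finset.single_le_sum (f := fun l' => (U i l') ^ 2)
        (fun _ _ => sq_nonneg _) (Finset.mem_univ l))
    have h3 : Real.sqrt (∑ l', (U i l') ^ 2) ≤ μ1 :=
      le_ciSup (f := fun i : Fin n => Real.sqrt (∑ l, (U i l) ^ 2))
        (Set.Finite.bddAbove (Set.finite_range _)) i
    linarith
  have hVb : ∀ j l, |V j l| ≤ μ2 := by
    intro j l
    have h1 : |V j l| = Real.sqrt ((V j l) ^ 2) := (Real.sqrt_sq_eq_abs _).symm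
    have h2 : Real.sqrt ((V j l) ^ 2) ≤ Real.sqrt (∑ l', (V j l') ^ 2) :=
      Real.sqrt_le_sqrt (Finset.single_le_sum (f := fun l' => (V j l') ^ 2)
        (fun _ _ => sq_nonneg _) (Finset.mem_univ l))
    have h3 : Real.sqrt (∑ l', (V j l') ^ 2) ≤ μ2 :=
      le_ciSup (f := fun j : Fin m => Real.sqrt (∑ l, (V j l) ^ 2))
        (Set.Finite.bddAbove (Set.finite_range _)) j
    linarith
  have hA : ∀ i j, A i j = ∑ l, U i l * σ l * V j l := by
    intro i j
    rw [hSVD, Matrix.mul_apply]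
    refine Finset.sum_congr rfl fun l _ => ?_
    rw [Matrix.mul_diagonal, transpose_apply]
  obtain ⟨W, hWcon, hWtr⟩ := exists_dual (A ⊙ B)
  have hD : ∀ (u : Fin n → ℝ) (v : Fin m → ℝ) (i j),
      (diagonal u * W * diagonal v) i j = u i * W i j * v j := by
    intro u v i j
    rw [Matrix.mul_diagonal, Matrix.diagonal_mul]
  have hexp : trace (Wᵀ * (A ⊙ B)) = ∑ l, σ l *
      trace ((diagonal (fun i => U i l) * W * diagonal (fun j => V j l))ᵀ * B) := by
    calc trace (Wᵀ * (A ⊙ B)) = ∑ j, ∑ i, ∑ l, σ l * (U i l * W i j * V j l * B i j) := by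
          rw [trace_form]
          refine Finset.sum_congr rfl fun j _ => Finset.sum_congr rfl fun i _ => ?_
          rw [Matrix.hadamard_apply, hA i j, Finset.sum_mul, Finset.mul_sum]
          exact Finset.sum_congr rfl fun l _ => by ring
      _ = ∑ l, ∑ j, ∑ i, σ l * (U i l * W i j * V j l * B i j) := by
          calc ∑ j, ∑ i, ∑ l, σ l * (U i l * W i j * V j l * B i j)
              = ∑ j, ∑ l, ∑ i, σ l * (U i l * W i j * V j l * B i j) :=
                Finset.sum_congr rfl fun j _ => Finset.sum_comm
            _ = ∑ l, ∑ j, ∑ i, σ l * (U i l * W i j * V j l * B i j) :=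
                Finset.sum_comm
      _ = ∑ l, σ l *
          trace ((diagonal (fun i => U i l) * W * diagonal (fun j => V j l))ᵀ * B) := by
          refine Finset.sum_congr rfl fun l _ => ?_
          rw [trace_form, Finset.mul_sum]
          refine Finset.sum_congr rfl fun j _ => ?_
          rw [Finset.mul_sum]
          refine Finset.sum_congr rfl fun i _ => ?_
          rw [hD]
  have hTl : ∀ l, trace ((diagonal (fun i => U i l) * W * diagonal (fun j => V j l))ᵀ * B)
      ≤ μ1 * μ2 * traceNorm B := fun l =>
    trace_diag_bound B W hWcon _ _ μ1 μ2 hμ1nn hμ2nn (fun i => hUb i l) (fun j => hVb j l)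
  have hσsum : ∑ l, σ l ≤ traceNorm A := by
    have hcon : IsCon (U * Vᵀ) :=
      isCon_mul (isCon_orthonormal hU) (isCon_transpose_orthonormal hV)
    have h := trace_le_traceNorm A (U * Vᵀ) hcon
    have heq : trace ((U * Vᵀ)ᵀ * A) = ∑ l, σ l := by
      have h1 : (U * Vᵀ)ᵀ * A = V * diagonal σ * Vᵀ := by
        rw [transpose_mul, transpose_transpose, hSVD]
        calc V * Uᵀ * (U * diagonal σ * Vᵀ) = V * ((Uᵀ * U) * (diagonal σ * Vᵀ)) := by
              simp only [← Matrix.mul_assoc]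
          _ = V * diagonal σ * Vᵀ := by rw [hU, Matrix.one_mul, ← Matrix.mul_assoc]
      rw [h1, trace_mul_comm, ← Matrix.mul_assoc, hV, Matrix.one_mul, trace_diagonal]
    rw [heq] at h
    exact h
  have hμ1A : μ1 ≤ μA := le_max_left _ _
  have hμ2A : μ2 ≤ μA := le_max_right _ _
  have hμAnn : 0 ≤ μA := hμ1nn.trans hμ1A
  have htB : 0 ≤ traceNorm B := traceNorm_nonneg B
  have hs : 0 ≤ ∑ l, σ l := Finset.sum_nonneg fun l _ => hσ l
  calc traceNorm (A ⊙ B) = ∑ l, σ l *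
        trace ((diagonal (fun i => U i l) * W * diagonal (fun j => V j l))ᵀ * B) :=
        hWtr.symm.trans hexp
    _ ≤ ∑ l, σ l * (μ1 * μ2 * traceNorm B) :=
        Finset.sum_le_sum fun l _ => mul_le_mul_of_nonneg_left (hTl l) (hσ l)
    _ = (∑ l, σ l) * (μ1 * μ2 * traceNorm B) := by rw [← Finset.sum_mul]
    _ ≤ (∑ l, σ l) * (μA * μA * traceNorm B) := by
        refine mul_le_mul_of_nonneg_left ?_ hs
        exact mul_le_mul_of_nonneg_right
          (mul_le_mul hμ1A hμ2A hμ2nn hμAnn) htB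
    _ ≤ traceNorm A * (μA * μA * traceNorm B) :=
        mul_le_mul_of_nonneg_right hσsum
          (mul_nonneg (mul_nonneg hμAnn hμAnn) htB)
    _ = μA ^ 2 * traceNorm A * traceNorm B := by ring
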